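/- Let G be a finite tree (a connected acyclic simple graph) on n vertices, with n ≥ 2. For each vertex v, fix a bijection port_v from the neighbors of v to Fin (deg v), where deg v is the degree of v. Define the next-port (Eulerian traversal) map T on the darts of G (ordered pairs (u, v) of adjacent vertices) by: T (u, v) = (v, w), where w is the unique neighbor of v with port_v w = port_v u + 1 (mod deg v). Then T is a permutation of the set of darts of G, this set has exactly 2*(n − 1) elements, and T acts on it as a single cycle: for any two darts d and d' there exists k < 2*(n − 1) with T^[k] d = d'. -/

import Mathlib

set_option linter.unusedSectionVars false
open SimpleGraph

section Side
variable {V : Type*} [DecidableEq V] (G : SimpleGraph V)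

/-- Vertices reachable from `v` by a walk avoiding the edge `s(u,v)`. -/
def mySide (u v : V) : Set V := {x | ∃ p : G.Walk v x, s(u,v) ∉ p.edges}

variable {G}

lemma mySide_self (u v : V) : v ∈ mySide G u v := ⟨Walk.nil, by simp⟩

lemma bridge_walk (hG : G.IsAcyclic) {u v : V} (h : G.Adj u v) :
    ∀ p : G.Walk u v, s(u,v) ∈ p.edges :=
  (isBridge_iff_forall_walk_mem_edges.mp
    ((isAcyclic_iff_forall_adj_isBridge.mp hG) h))

lemma not_mem_mySide (hG : G.IsAcyclic) {u v : V} (h : G.Adj u v) :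
    u ∉ mySide G u v := by
  rintro ⟨p, hp⟩
  have := bridge_walk hG h p.reverse
  rw [Walk.edges_reverse, List.mem_reverse] at this
  exact hp this

lemma mySide_subset (hG : G.IsAcyclic) {u v w : V} (h : G.Adj u v) (hw : G.Adj v w)
    (hwu : w ≠ u) : mySide G v w ⊆ mySide G u v := by
  rintro x ⟨p, hp⟩
  have huv : s(u,v) ≠ s(v,w) := by
    simp only [ne_eq, Sym2.eq_iff]
    push_neg
    constructor
    · rintro rfl; exact absurd rfl h.ne
    · intro h1; exact absurd h1.symm hwu
  have hu : u ∉ p.support := by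
    intro hu
    have hq : s(v,w) ∉ (p.takeUntil u hu).edges :=
      fun hh => hp (p.edges_takeUntil_subset hu hh)
    have := bridge_walk hG hw.symm ((p.takeUntil u hu).append h.toWalk)
    rw [Walk.edges_append] at this
    rcases List.mem_append.mp this with h1 | h2
    · rw [Sym2.eq_swap] at hq; exact hq h1
    · simp only [Adj.toWalk, Walk.edges_cons, Walk.edges_nil, List.mem_singleton] at h2
      rw [Sym2.eq_swap] at h2
      exact huv h2.symm
  have he : s(u,v) ∉ p.edges := fun hme => hu (p.fst_mem_support_of_mem_edges hme)
  exact ⟨Walk.cons hw p, by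
    rw [Walk.edges_cons, List.mem_cons]
    rintro (h1 | h2)
    · exact huv h1
    · exact he h2⟩

lemma mySide_ssubset (hG : G.IsAcyclic) {u v w : V} (h : G.Adj u v) (hw : G.Adj v w)
    (hwu : w ≠ u) : mySide G v w ⊂ mySide G u v :=
  ⟨mySide_subset hG h hw hwu, fun hsub =>
    not_mem_mySide hG hw (hsub (mySide_self u v))⟩

end Side



/-- The next-port (Eulerian traversal) map on the darts of a locally finite graph:
a dart `(u, v)` is mapped to `(v, w)` where `w` is the unique neighbor of `v` whose
local port label at `v` is one more (mod `deg v`) than the port label of `u` at `v`.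
Here `port v` is a fixed bijection from the neighbors of `v` to `Fin (deg v)`. -/
def nextDart {V : Type*} [Fintype V] [DecidableEq V] (G : SimpleGraph V)
    [DecidableRel G.Adj] (port : ∀ v : V, G.neighborSet v ≃ Fin (G.degree v))
    (d : G.Dart) : G.Dart :=
  let v := d.toProd.2
  let i : Fin (G.degree v) := port v ⟨d.toProd.1, d.adj.symm⟩
  let j : Fin (G.degree v) := ⟨(i.val + 1) % G.degree v, Nat.mod_lt _ i.pos⟩
  let w := (port v).symm j
  ⟨(v, w.1), w.2⟩


section Dart
variable {V : Type*} [Fintype V] [DecidableEq V] (G : SimpleGraph V)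
  [DecidableRel G.Adj] (port : ∀ v : V, G.neighborSet v ≃ Fin (G.degree v))

/-- The dart out of `v` through the port `j`. -/
def dartOut (v : V) (j : Fin (G.degree v)) : G.Dart :=
  ⟨(v, ((port v).symm j).1), ((port v).symm j).2⟩

lemma nextDart_apply (u v : V) (h : G.Adj u v) :
    nextDart G port ⟨(u,v), h⟩ =
      dartOut G port v ⟨((port v ⟨u, h.symm⟩).val + 1) % G.degree v,
        Nat.mod_lt _ (port v ⟨u, h.symm⟩).pos⟩ := rfl

lemma dartOut_port (v : V) {w : V} (hw : G.Adj v w) :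
    dartOut G port v (port v ⟨w, hw⟩) = ⟨(v, w), hw⟩ := by
  unfold dartOut
  congr 1
  rw [Equiv.symm_apply_apply]

end Dart

lemma mod_ne_of_lt {i t n : ℕ} (hi : i < n) (ht1 : 1 ≤ t) (ht : t < n) :
    (i + t) % n ≠ i := by
  intro hmod
  rcases Nat.lt_or_ge (i + t) n with hlt | hge
  · rw [Nat.mod_eq_of_lt hlt] at hmod; omega
  · rw [Nat.mod_eq_sub_mod hge, Nat.mod_eq_of_lt (by omega)] at hmod; omega


section Main
variable {V : Type*} [Fintype V] [DecidableEq V] (G : SimpleGraph V)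
  [DecidableRel G.Adj] (port : ∀ v : V, G.neighborSet v ≃ Fin (G.degree v))

lemma excursion (hG : G.IsAcyclic) :
    ∀ (N : ℕ) (u v : V) (h : G.Adj u v), (mySide G u v).ncard ≤ N →
    ∀ t : ℕ, 1 ≤ t → t ≤ G.degree v →
    ∃ k, (nextDart G port)^[k] ⟨(u,v), h⟩ =
      dartOut G port v ⟨((port v ⟨u, h.symm⟩).val + t) % G.degree v,
        Nat.mod_lt _ (port v ⟨u, h.symm⟩).pos⟩ := by
  intro N
  induction N with
  | zero =>
    intro u v h hle t _ _
    have : v ∈ mySide G u v := mySide_self u v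
    have : 0 < (mySide G u v).ncard :=
      Set.ncard_pos (Set.toFinite _) |>.mpr ⟨v, this⟩
    omega
  | succ N ih =>
    intro u v h hle t ht1 htd
    induction t, ht1 using Nat.le_induction with
    | base =>
      exact ⟨1, by rw [Function.iterate_one, nextDart_apply]⟩
    | succ t ht1 iht =>
      have htd' : t < G.degree v := by omega
      obtain ⟨k, hk⟩ := iht (le_of_lt htd')
      set i : Fin (G.degree v) := port v ⟨u, h.symm⟩ with hi
      set j : Fin (G.degree v) := ⟨(i.val + t) % G.degree v,
        Nat.mod_lt _ i.pos⟩ with hj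
      set wS := (port v).symm j with hwS
      have hw : G.Adj v wS.1 := wS.2
      have hwu : wS.1 ≠ u := by
        intro hwu
        have h1 : (port v).symm j = ⟨u, h.symm⟩ := Subtype.ext hwu
        have h2 : j = i := by
          rw [← Equiv.apply_symm_apply (port v) j, h1]
        have h3 : (i.val + t) % G.degree v = i.val := congrArg Fin.val h2
        exact mod_ne_of_lt i.isLt ht1 htd' h3
      have hcard : (mySide G v wS.1).ncard ≤ N := by
        have := Set.ncard_lt_ncard (mySide_ssubset hG h hw hwu) (Set.toFinite _)
        omega
      obtain ⟨m, hm⟩ := ih v wS.1 hw hcard (G.degree wS.1)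
        (port wS.1 ⟨v, hw.symm⟩).pos le_rfl
      have hfin : (⟨((port wS.1 ⟨v, hw.symm⟩).val + G.degree wS.1) % G.degree wS.1,
          Nat.mod_lt _ (port wS.1 ⟨v, hw.symm⟩).pos⟩ : Fin (G.degree wS.1)) =
          port wS.1 ⟨v, hw.symm⟩ := by
        apply Fin.ext
        simp [Nat.add_mod_right, Nat.mod_eq_of_lt (port wS.1 ⟨v, hw.symm⟩).isLt]
      rw [hfin, dartOut_port] at hm
      refine ⟨1 + (m + k), ?_⟩
      rw [Function.iterate_add_apply, Function.iterate_add_apply,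
        Function.iterate_one, hk]
      have hdo : dartOut G port v j = ⟨(v, wS.1), hw⟩ := rfl
      rw [hdo, hm, nextDart_apply]
      congr 1
      apply Fin.ext
      have hpw : port v ⟨wS.1, hw⟩ = j := by
        have heq : (⟨wS.1, hw⟩ : G.neighborSet v) = wS := Subtype.ext rfl
        rw [heq, hwS, Equiv.apply_symm_apply]
      rw [hpw]
      show (((i.val + t) % G.degree v) + 1) % G.degree v
        = (i.val + (t+1)) % G.degree v
      rw [Nat.mod_add_mod, Nat.add_assoc]

lemma reach_outDart (hG : G.IsAcyclic) {u v w : V} (h : G.Adj u v) (hw : G.Adj v w) :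
    ∃ k, (nextDart G port)^[k] ⟨(u,v), h⟩ = ⟨(v,w), hw⟩ := by
  have hi : (port v ⟨u, h.symm⟩).val < G.degree v := (port v ⟨u, h.symm⟩).isLt
  have hjw : (port v ⟨w, hw⟩).val < G.degree v := (port v ⟨w, hw⟩).isLt
  set i := (port v ⟨u, h.symm⟩).val with hidef
  set jw := (port v ⟨w, hw⟩).val with hjwdef
  set n := G.degree v with hn
  by_cases h0 : (jw + n - i) % n = 0
  · -- then jw = i and we go all the way around
    have hji : jw = i := by
      obtain ⟨c, hc⟩ := Nat.dvd_of_mod_eq_zero h0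
      have h2 : 2 ≤ c → 2 * n ≤ n * c := fun hcc => by
        calc 2 * n = n * 2 := by ring
        _ ≤ n * c := Nat.mul_le_mul_left n hcc
      rcases Nat.lt_or_ge c 2 with hc2 | hc2
      · interval_cases c <;> omega
      · have := h2 hc2; omega
    obtain ⟨k, hk⟩ := excursion G port hG (mySide G u v).ncard u v h le_rfl n
      (by omega) le_rfl
    refine ⟨k, ?_⟩
    rw [hk]
    have hfin : (⟨(i + n) % n, Nat.mod_lt _ (port v ⟨u, h.symm⟩).pos⟩ : Fin n) =
        port v ⟨w, hw⟩ := by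
      apply Fin.ext
      show (i + n) % n = jw
      rw [Nat.add_mod_right, Nat.mod_eq_of_lt hi, hji]
    rw [hfin, dartOut_port]
  · set t := (jw + n - i) % n with ht
    have htlt : t < n := Nat.mod_lt _ (by omega)
    obtain ⟨k, hk⟩ := excursion G port hG (mySide G u v).ncard u v h le_rfl t
      (by omega) (by omega)
    refine ⟨k, ?_⟩
    rw [hk]
    have hfin : (⟨(i + t) % n, Nat.mod_lt _ (port v ⟨u, h.symm⟩).pos⟩ : Fin n) =
        port v ⟨w, hw⟩ := by
      apply Fin.ext
      show (i + t) % n = jw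
      rw [ht, Nat.add_mod_mod]
      have : i + (jw + n - i) = jw + n := by omega
      rw [this, Nat.add_mod_right, Nat.mod_eq_of_lt hjw]
    rw [hfin, dartOut_port]

lemma reach_dart (hG : G.IsAcyclic) {b c : V} (p : G.Walk b c) :
    ∀ {a e : V} (h : G.Adj a b) (h' : G.Adj c e),
    ∃ k, (nextDart G port)^[k] ⟨(a,b), h⟩ = ⟨(c,e), h'⟩ := by
  induction p with
  | nil =>
    intro a e h h'
    exact reach_outDart G port hG h h'
  | @cons b x c hbx q ih =>
    intro a e h h'
    obtain ⟨k₁, hk₁⟩ := reach_outDart G port hG h hbx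
    obtain ⟨k₂, hk₂⟩ := ih hbx h'
    exact ⟨k₂ + k₁, by rw [Function.iterate_add_apply, hk₁, hk₂]⟩

lemma succ_mod_cancel {a b n : ℕ} (ha : a < n) (hb : b < n)
    (h : (a+1) % n = (b+1) % n) : a = b := by
  rcases Nat.lt_or_ge (a+1) n with h1 | h1 <;> rcases Nat.lt_or_ge (b+1) n with h2 | h2
  · rw [Nat.mod_eq_of_lt h1, Nat.mod_eq_of_lt h2] at h; omega
  · have hb1 : b + 1 = n := by omega
    rw [Nat.mod_eq_of_lt h1, hb1, Nat.mod_self] at h; omega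
  · have ha1 : a + 1 = n := by omega
    rw [ha1, Nat.mod_self, Nat.mod_eq_of_lt h2] at h; omega
  · omega

lemma nextDart_injective : Function.Injective (nextDart G port) := by
  rintro ⟨⟨a, b⟩, h⟩ ⟨⟨a', b'⟩, h'⟩ heq
  rw [nextDart_apply, nextDart_apply] at heq
  have hb : b = b' := congrArg (fun d : G.Dart => d.toProd.1) heq
  subst hb
  have hsnd := congrArg (fun d : G.Dart => d.toProd.2) heq
  simp only [dartOut] at hsnd
  have hS : ((port b).symm ⟨((port b ⟨a, h.symm⟩).val + 1) % G.degree b,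
      Nat.mod_lt _ (port b ⟨a, h.symm⟩).pos⟩) =
      ((port b).symm ⟨((port b ⟨a', h'.symm⟩).val + 1) % G.degree b,
      Nat.mod_lt _ (port b ⟨a', h'.symm⟩).pos⟩) := Subtype.ext hsnd
  have hfin := (port b).symm.injective hS
  have hval : ((port b ⟨a, h.symm⟩).val + 1) % G.degree b
      = ((port b ⟨a', h'.symm⟩).val + 1) % G.degree b := congrArg Fin.val hfin
  have hii : port b ⟨a, h.symm⟩ = port b ⟨a', h'.symm⟩ :=
    Fin.ext (succ_mod_cancel (port b ⟨a, h.symm⟩).isLt (port b ⟨a', h'.symm⟩).isLt hval)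
  have := congrArg Subtype.val ((port b).injective hii)
  simp only at this
  subst this
  rfl

end Main


/-- In a finite tree on `n ≥ 2` vertices, the next-port map is a permutation of the
set of darts, this set has exactly `2*(n-1)` elements, and the next-port map acts on
it as a single cycle. -/
theorem tree_nextDart_single_cycle {V : Type*} [Fintype V] [DecidableEq V]
    (G : SimpleGraph V) [DecidableRel G.Adj] (hG : G.IsTree)
    (hn : 2 ≤ Fintype.card V)
    (port : ∀ v : V, G.neighborSet v ≃ Fin (G.degree v)) :
    Function.Bijective (nextDart G port) ∧
      Fintype.card G.Dart = 2 * (Fintype.card V - 1) ∧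
      ∀ d d' : G.Dart, ∃ k < 2 * (Fintype.card V - 1),
        (nextDart G port)^[k] d = d' := by
  have hAc : G.IsAcyclic := hG.2
  have hinj := nextDart_injective G port
  have hbij : Function.Bijective (nextDart G port) :=
    ⟨hinj, Finite.surjective_of_injective hinj⟩
  have hcard : Fintype.card G.Dart = 2 * (Fintype.card V - 1) := by
    have h1 := hG.card_edgeFinset
    rw [G.dart_card_eq_twice_card_edges]
    omega
  refine ⟨hbij, hcard, ?_⟩
  intro d d'
  obtain ⟨⟨a, b⟩, h⟩ := d
  obtain ⟨⟨c, e⟩, h'⟩ := d'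
  obtain ⟨p⟩ := hG.1.preconnected b c
  obtain ⟨k, hk⟩ := reach_dart G port hAc p h h'
  set N := 2 * (Fintype.card V - 1) with hN
  set T := nextDart G port with hT
  set d : G.Dart := ⟨(a,b), h⟩ with hd
  have hlt : Fintype.card G.Dart < Fintype.card (Fin (N+1)) := by
    rw [hcard, Fintype.card_fin]; omega
  obtain ⟨x, y, hxy, hfeq⟩ := Fintype.exists_ne_map_eq_of_card_lt
    (fun x : Fin (N+1) => T^[x.val] d) hlt
  have key : ∃ p₀, 0 < p₀ ∧ p₀ ≤ N ∧ T^[p₀] d = d := by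
    rcases Nat.lt_or_ge x.val y.val with hlt2 | hge
    · refine ⟨y.val - x.val, by omega, by have := y.isLt; omega, ?_⟩
      have h1 : T^[x.val] (T^[y.val - x.val] d) = T^[x.val] d := by
        rw [← Function.iterate_add_apply,
          show x.val + (y.val - x.val) = y.val by omega]
        exact hfeq.symm
      exact (hinj.iterate x.val) h1
    · have hlt2 : y.val < x.val := by
        rcases Nat.lt_or_ge y.val x.val with h2 | h2
        · exact h2
        · exact absurd (Fin.ext (by omega)) hxy
      refine ⟨x.val - y.val, by omega, by have := x.isLt; omega, ?_⟩
      have h1 : T^[y.val] (T^[x.val - y.val] d) = T^[y.val] d := by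
        rw [← Function.iterate_add_apply,
          show y.val + (x.val - y.val) = x.val by omega]
        exact hfeq
      exact (hinj.iterate y.val) h1
  obtain ⟨p₀, hp0, hpN, hdp⟩ := key
  have hper : ∀ q r, T^[p₀ * q + r] d = T^[r] d := by
    intro q
    induction q with
    | zero => simp
    | succ q ihq =>
      intro r
      rw [show p₀ * (q+1) + r = (p₀ * q + r) + p₀ by ring,
        Function.iterate_add_apply, hdp]
      exact ihq r
  refine ⟨k % p₀, lt_of_lt_of_le (Nat.mod_lt _ hp0) hpN, ?_⟩
  calc T^[k % p₀] d = T^[p₀ * (k / p₀) + k % p₀] d := (hper (k / p₀) (k % p₀)).symm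
    _ = T^[k] d := by rw [Nat.div_add_mod k p₀]
    _ = _ := hk
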